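/- Let (X,ν) be a standard Borel probability space, f: X → X an invertible measure-preserving ergodic transformation, M a compact metric space, and φ: X → Homeo(M) measurable; let F(x,p) = (f(x), φ_x(p)) be the skew product on X×M, and let μ be an F-invariant ergodic Borel probability measure on X×M whose projection to X is ν, with fiberwise disintegration {μ_x}. Assume that for ν-a.e. x, (φ_x)_*μ_x = μ_{f(x)}. Suppose there exist a measurable set Λ ⊆ X×M and constants R > 0, C > 0, 0 < c < 1 such that: (i) μ(Λ) > 1/2; (ii) for every (x,p) ∈ Λ, μ_x(Λ_x) > 1/2, where Λ_x = {q ∈ M : (x,q) ∈ Λ}; (iii) for every (x,p) ∈ Λ, every q ∈ M with d(p,q) ≤ R, and every m ≥ 0, one has d(φ_x^{(m)}(p), φ_x^{(m)}(q)) ≤ C c^m d(p,q). Then there exist a measurable set S ⊆ X×M and an integer k ≥ 1 such that μ(S) = 1 and for every (x,p) ∈ S, the set S ∩ ({x}×M) has exactly k elements. -/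

import Mathlib

open MeasureTheory Set ProbabilityTheory Metric
open scoped ENNReal Topology

/-- Iterated fiber maps of the skew product `F(x,p) = (f x, φ x p)`:
`φ^{(0)}_x = id` and `φ^{(m+1)}_x = φ_{f^m x} ∘ φ^{(m)}_x`. -/
def fiberIter {X M : Type*} (f : X → X) (φ : X → M → M) : ℕ → X → M → M
  | 0, _, p => p
  | m + 1, x, p => φ (f^[m] x) (fiberIter f φ m x p)

set_option linter.unusedSectionVars false

section AuxLemmas
variable {X M : Type*} [MeasurableSpace X] [MeasurableSpace M]

/-- Per-set uniqueness of disintegration, without measurability of `x ↦ μx x _`. -/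
lemma transfer_lemma {X M : Type*} [MeasurableSpace X] [MeasurableSpace M]
    (ν : Measure X) [IsProbabilityMeasure ν]
    (κ : Kernel X M) [IsMarkovKernel κ]
    (μ : Measure (X × M)) [IsProbabilityMeasure μ] (hμ : ν ⊗ₘ κ = μ)
    (μx : X → Measure M) (hμxprob : ∀ x, IsProbabilityMeasure (μx x))
    (hdisint : ∀ E : Set (X × M), MeasurableSet E →
      μ E = ∫⁻ x, μx x {p | (x, p) ∈ E} ∂ν)
    {E : Set (X × M)} (hE : MeasurableSet E) :
    ∀ᵐ x ∂ν, μx x (Prod.mk x ⁻¹' E) = κ x (Prod.mk x ⁻¹' E) := by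
  have hsec : ∀ (F : Set (X × M)), MeasurableSet F → ∀ x : X,
      MeasurableSet (Prod.mk x ⁻¹' F) := fun F hF x => hF.preimage measurable_prodMk_left
  set g : X → ℝ≥0∞ := fun x => μx x (Prod.mk x ⁻¹' E) with hg
  set g' : X → ℝ≥0∞ := fun x => μx x (Prod.mk x ⁻¹' Eᶜ) with hg'
  have hsum : ∀ x, g x + g' x = 1 := by
    intro x
    have h1 := hμxprob x
    have h2 : μx x (Prod.mk x ⁻¹' E) + μx x ((Prod.mk x ⁻¹' E)ᶜ) = μx x univ :=
      measure_add_measure_compl (hsec E hE x)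
    simpa [g, g', Set.preimage_compl, measure_univ] using h2
  obtain ⟨m, hmmeas, hmle, hmint⟩ := exists_measurable_le_lintegral_eq ν g
  obtain ⟨m', hm'meas, hm'le, hm'int⟩ := exists_measurable_le_lintegral_eq ν g'
  have hgle : ∀ x, g x ≤ 1 := fun x => (hsum x) ▸ le_add_right le_rfl
  have hg'le : ∀ x, g' x ≤ 1 := fun x => (hsum x) ▸ le_add_left le_rfl
  -- integrals of g, g' via hdisint
  have hgint : ∫⁻ x, g x ∂ν = μ E := by
    rw [hdisint E hE]; rfl
  have hg'int : ∫⁻ x, g' x ∂ν = μ Eᶜ := by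
    rw [hdisint Eᶜ hE.compl]; rfl
  -- m + m' = 1 a.e.
  have hmm'le : ∀ x, m x + m' x ≤ 1 := fun x =>
    (hsum x) ▸ add_le_add (hmle x) (hm'le x)
  have hint1 : ∫⁻ x, (m x + m' x) ∂ν = 1 := by
    rw [lintegral_add_left hmmeas, ← hmint, ← hm'int, hgint, hg'int]
    rw [← measure_univ (μ := μ)]
    exact measure_add_measure_compl hE
  have hmm'ae : ∀ᵐ x ∂ν, m x + m' x = 1 := by
    have hsub : ∫⁻ x, (1 - (m x + m' x)) ∂ν = 0 := by
      rw [lintegral_sub (g := fun x => m x + m' x) (hmmeas.add hm'meas) (by rw [hint1]; exact ENNReal.one_ne_top)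
        (Filter.Eventually.of_forall hmm'le), hint1, lintegral_one, measure_univ, tsub_self]
    have := (lintegral_eq_zero_iff (measurable_const.sub (hmmeas.add hm'meas))).mp hsub
    filter_upwards [this] with x hx
    have : (1 : ℝ≥0∞) - (m x + m' x) = 0 := hx
    exact le_antisymm (hmm'le x) (tsub_eq_zero_iff_le.mp this)
  -- g = m a.e.
  have hgm : g =ᵐ[ν] m := by
    filter_upwards [hmm'ae] with x hx
    refine le_antisymm ?_ (hmle x)
    have h1 : g x + m' x ≤ m x + m' x := by
      rw [hx, ← hsum x]; exact add_le_add le_rfl (hm'le x)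
    exact ENNReal.le_of_add_le_add_right (lt_of_le_of_lt (hm'le x) (lt_of_le_of_lt (hg'le x) ENNReal.one_lt_top)).ne h1
  -- κ side
  set h : X → ℝ≥0∞ := fun x => κ x (Prod.mk x ⁻¹' E) with hh
  have hhmeas : Measurable h := Kernel.measurable_kernel_prodMk_left hE
  -- on every measurable set, ∫ m = ∫ h
  have hseteq : ∀ A : Set X, MeasurableSet A →
      ∫⁻ x in A, m x ∂ν = ∫⁻ x in A, h x ∂ν := by
    intro A hA
    have e1 : ∫⁻ x in A, m x ∂ν = ∫⁻ x in A, g x ∂ν :=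
      lintegral_congr_ae (ae_restrict_of_ae (hgm.symm.mono fun x hx => hx))
    have hEA : MeasurableSet (E ∩ A ×ˢ (univ : Set M)) := hE.inter (hA.prod MeasurableSet.univ)
    have e2 : ∫⁻ x in A, g x ∂ν = μ (E ∩ A ×ˢ univ) := by
      rw [hdisint _ hEA, ← lintegral_indicator hA]
      refine lintegral_congr fun x => ?_
      by_cases hxA : x ∈ A
      · have : {p : M | (x, p) ∈ E ∩ A ×ˢ univ} = Prod.mk x ⁻¹' E := by
          ext p; simp [hxA]
        rw [this, Set.indicator_of_mem hxA]
      · have : {p : M | (x, p) ∈ E ∩ A ×ˢ univ} = ∅ := by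
          ext p; simp [hxA]
        rw [this, Set.indicator_of_notMem hxA]; simp
    have e3 : μ (E ∩ A ×ˢ univ) = ∫⁻ x in A, h x ∂ν := by
      rw [← hμ, Measure.compProd_apply hEA, ← lintegral_indicator hA]
      refine lintegral_congr fun x => ?_
      by_cases hxA : x ∈ A
      · have : Prod.mk x ⁻¹' (E ∩ A ×ˢ univ) = Prod.mk x ⁻¹' E := by
          ext p; simp [hxA]
        rw [this, Set.indicator_of_mem hxA]
      · have : Prod.mk x ⁻¹' (E ∩ A ×ˢ univ) = ∅ := by
          ext p; simp [hxA]
        rw [this, Set.indicator_of_notMem hxA]; simp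
    rw [e1, e2, e3]
  have hmh : m =ᵐ[ν] h := by
    refine ae_eq_of_forall_setLIntegral_eq_of_sigmaFinite hmmeas hhmeas ?_
    intro A hA _
    exact hseteq A hA
  exact hgm.trans hmh

lemma pi_system_gen {M : Type*} [MeasurableSpace M] [TopologicalSpace M] [BorelSpace M]
    [SecondCountableTopology M] :
    ∃ PS : Set (Set M), PS.Countable ∧ IsPiSystem PS ∧
      (‹MeasurableSpace M› = MeasurableSpace.generateFrom PS) ∧
      ∀ U ∈ PS, MeasurableSet U := by
  classical
  set B := TopologicalSpace.countableBasis M with hB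
  refine ⟨Set.sInter '' {F : Set (Set M) | F.Finite ∧ F ⊆ B}, ?_, ?_, ?_, ?_⟩
  · exact (Set.countable_setOf_finite_subset (TopologicalSpace.countable_countableBasis M)).image _
  · rintro s ⟨F, ⟨hFfin, hFB⟩, rfl⟩ t ⟨G, ⟨hGfin, hGB⟩, rfl⟩ -
    exact ⟨F ∪ G, ⟨hFfin.union hGfin, Set.union_subset hFB hGB⟩, Set.sInter_union F G⟩
  · have hbor : (‹MeasurableSpace M› : MeasurableSpace M) = borel M := BorelSpace.measurable_eq
    have hgen : borel M = MeasurableSpace.generateFrom B :=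
      (TopologicalSpace.isBasis_countableBasis M).borel_eq_generateFrom
    refine le_antisymm ?_ ?_
    · rw [hbor, hgen]
      refine MeasurableSpace.generateFrom_le fun s hs => ?_
      exact MeasurableSpace.measurableSet_generateFrom
        ⟨{s}, ⟨Set.finite_singleton s, Set.singleton_subset_iff.2 hs⟩, Set.sInter_singleton s⟩
    · refine MeasurableSpace.generateFrom_le ?_
      rintro s ⟨F, ⟨hFfin, hFB⟩, rfl⟩
      exact MeasurableSet.sInter hFfin.countable fun t ht =>
        (TopologicalSpace.isOpen_of_mem_countableBasis (hFB ht)).measurableSet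
  · rintro s ⟨F, ⟨hFfin, hFB⟩, rfl⟩
    exact MeasurableSet.sInter hFfin.countable fun t ht =>
      (TopologicalSpace.isOpen_of_mem_countableBasis (hFB ht)).measurableSet

lemma kernel_equiv [TopologicalSpace M] [BorelSpace M] [SecondCountableTopology M]
    (ν : Measure X) [IsProbabilityMeasure ν]
    (f : X → X) (hf : MeasurePreserving f ν ν)
    (κ : Kernel X M) [IsMarkovKernel κ]
    (μ : Measure (X × M)) [IsProbabilityMeasure μ] (hμ : ν ⊗ₘ κ = μ)
    (μx : X → Measure M) (hμxprob : ∀ x, IsProbabilityMeasure (μx x))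
    (hdisint : ∀ E : Set (X × M), MeasurableSet E →
      μ E = ∫⁻ x, μx x {p | (x, p) ∈ E} ∂ν)
    (φ : X → M → M) (hφm : ∀ x, Measurable (φ x))
    (hφmeas : Measurable fun z : X × M => φ z.1 z.2)
    (hequiv : ∀ᵐ x ∂ν, (μx x).map (φ x) = μx (f x)) :
    ∀ᵐ x ∂ν, (κ x).map (φ x) = κ (f x) := by
  obtain ⟨PS, hPSc, hPSpi, hPSgen, hPSmeas⟩ := pi_system_gen (M := M)
  have h1 : ∀ᵐ x ∂ν, ∀ U ∈ PS, μx x U = κ x U := by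
    rw [ae_ball_iff hPSc]
    intro U hU
    have := transfer_lemma ν κ μ hμ μx hμxprob hdisint
      (E := (univ : Set X) ×ˢ U) (MeasurableSet.univ.prod (hPSmeas U hU))
    filter_upwards [this] with x hx
    simpa using hx
  have h2 : ∀ᵐ x ∂ν, ∀ U ∈ PS, μx x (φ x ⁻¹' U) = κ x (φ x ⁻¹' U) := by
    rw [ae_ball_iff hPSc]
    intro U hU
    exact transfer_lemma ν κ μ hμ μx hμxprob hdisint
      (E := (fun z : X × M => φ z.1 z.2) ⁻¹' U) (hφmeas (hPSmeas U hU))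
  have h3 : ∀ᵐ x ∂ν, ∀ U ∈ PS, μx (f x) U = κ (f x) U :=
    hf.quasiMeasurePreserving.ae h1
  filter_upwards [h1, h2, h3, hequiv] with x hx1 hx2 hx3 hxeq
  have : IsProbabilityMeasure ((κ x).map (φ x)) := Measure.isProbabilityMeasure_map (hφm x).aemeasurable
  refine MeasureTheory.ext_of_generate_finite PS hPSgen hPSpi (fun U hU => ?_) (by simp)
  rw [Measure.map_apply (hφm x) (hPSmeas U hU), ← hx2 U hU]
  have : (μx x).map (φ x) U = μx (f x) U := by rw [hxeq]
  rw [Measure.map_apply (hφm x) (hPSmeas U hU)] at this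
  rw [this, hx3 U hU]

lemma fiberIter_measurable (f : X → X) (φ : X → M → M) (hφm : ∀ x, Measurable (φ x))
    (m : ℕ) (x : X) : Measurable (fiberIter f φ m x) := by
  induction m with
  | zero => exact measurable_id
  | succ m ih => exact (hφm _).comp ih

lemma kernel_iter (ν : Measure X) [IsProbabilityMeasure ν]
    (f : X → X) (hf : MeasurePreserving f ν ν)
    (κ : Kernel X M) [IsMarkovKernel κ]
    (φ : X → M → M) (hφm : ∀ x, Measurable (φ x))
    (hq : ∀ᵐ x ∂ν, (κ x).map (φ x) = κ (f x)) :
    ∀ᵐ x ∂ν, ∀ m : ℕ, (κ x).map (fiberIter f φ m x) = κ (f^[m] x) := by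
  have hall : ∀ᵐ x ∂ν, ∀ n : ℕ, (κ (f^[n] x)).map (φ (f^[n] x)) = κ (f (f^[n] x)) := by
    rw [ae_all_iff]
    intro n
    exact (hf.iterate n).quasiMeasurePreserving.ae hq
  filter_upwards [hall] with x hx
  intro m
  induction m with
  | zero =>
      have : fiberIter f φ 0 x = id := rfl
      rw [this, Measure.map_id]
      simp [Function.iterate_zero]
  | succ m ih =>
      have hcomp : fiberIter f φ (m + 1) x = φ (f^[m] x) ∘ fiberIter f φ m x := rfl
      rw [hcomp, ← Measure.map_map (hφm _) (fiberIter_measurable f φ hφm m x), ih, hx m,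
        Function.iterate_succ_apply']

lemma g_measurable [TopologicalSpace M] [T2Space M] [SecondCountableTopology M] [BorelSpace M]
    (κ : Kernel X M) [IsMarkovKernel κ] :
    Measurable fun z : X × M => κ z.1 {z.2} := by
  have hdiag : MeasurableSet {w : (X × M) × M | w.1.2 = w.2} := by
    have : {w : (X × M) × M | w.1.2 = w.2} =
        (fun w : (X × M) × M => (w.1.2, w.2)) ⁻¹' {q : M × M | q.1 = q.2} := rfl
    rw [this]
    exact ((measurable_snd.comp measurable_fst).prodMk measurable_snd)
      (isClosed_diagonal.measurableSet)
  have := Kernel.measurable_kernel_prodMk_left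
    (κ := κ.comap Prod.fst measurable_fst) hdiag
  convert this using 2 with z
  rw [Kernel.comap_apply]
  congr 1
  ext q
  simp [eq_comm]

lemma fiber_count {M : Type*} [MeasurableSpace M] [MeasurableSingletonClass M]
    (ρ : Measure M) [IsProbabilityMeasure ρ] (a : ℝ≥0∞) (ha0 : a ≠ 0) (hatop : a ≠ ⊤)
    (A : Set M) (hAa : ∀ q ∈ A, ρ {q} = a) (hA1 : ρ A = 1) :
    ∃ n : ℕ, A.encard = n ∧ (n : ℝ≥0∞) * a = 1 := by
  classical
  have hsum : ∀ F : Finset M, ↑F ⊆ A → ρ ↑F = F.card * a := by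
    intro F hFA
    have hd : (↑F : Set M).PairwiseDisjoint (fun q => ({q} : Set M)) := by
      intro i _ j _ hij
      simp [Function.onFun, hij]
    have h1 : ρ (⋃ q ∈ F, ({q} : Set M)) = ∑ q ∈ F, ρ {q} :=
      measure_biUnion_finset hd fun q _ => measurableSet_singleton q
    have h2 : (⋃ q ∈ F, ({q} : Set M)) = ↑F := by
      ext q; simp
    rw [h2] at h1
    rw [h1]
    rw [Finset.sum_congr rfl fun q hq => hAa q (hFA hq), Finset.sum_const, nsmul_eq_mul]
  have hfin : A.Finite := by
    by_contra hinf
    obtain ⟨n, hn⟩ := ENNReal.exists_nat_gt (r := a⁻¹) (ENNReal.inv_ne_top.2 ha0)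
    obtain ⟨F, hFA, hFcard⟩ := (Set.Infinite.exists_subset_card_eq hinf n)
    have h1 : ρ ↑F = n * a := by rw [hsum F hFA, hFcard]
    have h2 : (1 : ℝ≥0∞) < n * a := by
      calc (1 : ℝ≥0∞) = a⁻¹ * a := (ENNReal.inv_mul_cancel ha0 hatop).symm
      _ < n * a := by
          exact ENNReal.mul_lt_mul_left ha0 hatop hn
    have h3 : ρ ↑F ≤ 1 := prob_le_one
    rw [h1] at h3
    exact absurd h3 (not_le.2 h2)
  refine ⟨hfin.toFinset.card, ?_, ?_⟩
  · rw [Set.Finite.encard_eq_coe_toFinset_card hfin]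
  · rw [← hsum hfin.toFinset (by simp), hfin.coe_toFinset, hA1]

end AuxLemmas

section AuxMetric
variable {X M : Type*} [MeasurableSpace X] [MetricSpace M] [CompactSpace M]
  [MeasurableSpace M] [BorelSpace M]

lemma atom_exists [Nonempty M]
    (ν : Measure X) [IsProbabilityMeasure ν]
    (f : X → X) (hf : MeasurePreserving f ν ν)
    (κ : Kernel X M) [IsMarkovKernel κ]
    (φ : X → M → M) (hφm : ∀ x, Measurable (φ x))
    (hiter : ∀ᵐ x ∂ν, ∀ m : ℕ, (κ x).map (fiberIter f φ m x) = κ (f^[m] x))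
    (Λ : Set (X × M)) (hΛmeas : MeasurableSet Λ)
    (R C c : ℝ) (hR : 0 < R) (hC : 0 < C) (hc0 : 0 < c) (hc1 : c < 1)
    (hcontr : ∀ z ∈ Λ, ∀ q : M, dist z.2 q ≤ R → ∀ m : ℕ,
      dist (fiberIter f φ m z.1 z.2) (fiberIter f φ m z.1 q) ≤ C * c ^ m * dist z.2 q)
    (hX0 : 0 < ν {x | 1 / 2 < κ x (Prod.mk x ⁻¹' Λ)}) :
    ∃ δ : ℝ≥0∞, 0 < δ ∧ ∃ Y : Set X, MeasurableSet Y ∧ 0 < ν Y ∧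
      ∀ y ∈ Y, ∃ q : M, δ ≤ κ y {q} := by
  classical
  -- finite cover of M by balls of radius R/2
  have hcov : (univ : Set M) ⊆ ⋃ p : M, ball p (R / 2) := fun q _ =>
    mem_iUnion.2 ⟨q, mem_ball_self (by linarith)⟩
  obtain ⟨t, ht⟩ := isCompact_univ.elim_finite_subcover (fun p : M => ball p (R / 2))
    (fun p => isOpen_ball) hcov
  have htN : t.Nonempty := by
    obtain ⟨q⟩ := ‹Nonempty M›
    obtain ⟨p, hp, -⟩ := mem_iUnion₂.1 (ht (mem_univ q))
    exact ⟨p, hp⟩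
  set N : ℕ := t.card with hNdef
  have hNpos : 0 < N := Finset.card_pos.2 htN
  set δ : ℝ≥0∞ := ((2 * N : ℕ) : ℝ≥0∞)⁻¹ with hδdef
  have hδpos : 0 < δ := ENNReal.inv_pos.2 (ENNReal.natCast_ne_top _)
  have hNne : ((N : ℝ≥0∞)) ≠ 0 := Nat.cast_ne_zero.2 hNpos.ne'
  -- good set for the iterate property
  set bad := {x | ¬ ∀ m : ℕ, (κ x).map (fiberIter f φ m x) = κ (f^[m] x)} with hbaddef
  have hbad : ν bad = 0 := by
    rw [← ae_iff.1 hiter]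
  set G₀ := (toMeasurable ν bad)ᶜ with hG₀def
  have hG₀meas : MeasurableSet G₀ := (measurableSet_toMeasurable ν bad).compl
  have hG₀prop : ∀ x ∈ G₀, ∀ m : ℕ, (κ x).map (fiberIter f φ m x) = κ (f^[m] x) := by
    intro x hx
    by_contra h
    exact hx (subset_toMeasurable ν bad h)
  set X₀ := {x | 1 / 2 < κ x (Prod.mk x ⁻¹' Λ)} with hX₀def
  have hβ : 0 < ν (X₀ ∩ G₀) := by
    by_contra h
    push_neg at h
    have h0 : ν (X₀ ∩ G₀) = 0 := le_antisymm h zero_le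
    have : ν X₀ ≤ ν (X₀ ∩ G₀) + ν (toMeasurable ν bad) := by
      refine le_trans (measure_mono ?_) (measure_union_le _ _)
      intro x hx
      by_cases hxg : x ∈ G₀
      · exact Or.inl ⟨hx, hxg⟩
      · exact Or.inr (not_not.1 hxg)
    rw [h0, measure_toMeasurable, hbad] at this
    simp only [add_zero] at this
    exact absurd (le_antisymm this zero_le) hX0.ne'
  -- countable dense set
  obtain ⟨D, hDc, hDd⟩ := TopologicalSpace.exists_countable_dense M
  set r : ℕ → ℝ := fun m => C * c ^ m * R with hrdef
  have hrpos : ∀ m, 0 < r m := fun m => by positivity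
  have hrmono : ∀ {n m : ℕ}, n ≤ m → r m ≤ r n := by
    intro n m hnm
    have : c ^ m ≤ c ^ n := pow_le_pow_of_le_one hc0.le hc1.le hnm
    have h1 : C * c ^ m ≤ C * c ^ n := by nlinarith
    have := mul_le_mul_of_nonneg_right h1 hR.le
    simpa [r] using this
  have hrtend : Filter.Tendsto r Filter.atTop (𝓝 0) := by
    have : Filter.Tendsto (fun m : ℕ => c ^ m) Filter.atTop (𝓝 0) :=
      tendsto_pow_atTop_nhds_zero_of_lt_one hc0.le hc1
    have h2 := (this.const_mul C).mul_const R
    simpa using h2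
  set H : ℕ → Set X := fun m => ⋃ d ∈ D, {y | δ ≤ κ y (closedBall d (2 * r m))} with hHdef
  have hHmeas : ∀ m, MeasurableSet (H m) := by
    intro m
    exact MeasurableSet.biUnion hDc fun d _ =>
      measurableSet_le measurable_const (κ.measurable_coe measurableSet_closedBall)
  -- the key inclusion
  have hincl : ∀ m : ℕ, X₀ ∩ G₀ ⊆ f^[m] ⁻¹' H m := by
    intro m x hx
    obtain ⟨hx0, hxG⟩ := hx
    set Λx := Prod.mk x ⁻¹' Λ with hΛxdef
    -- find a ball in the cover carrying mass ≥ δ of Λx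
    have hcover : κ x Λx ≤ ∑ p ∈ t, κ x (Λx ∩ ball p (R / 2)) := by
      refine le_trans (measure_mono ?_) (MeasureTheory.measure_biUnion_finset_le (μ := κ x) t _)
      intro q hq
      obtain ⟨p, hp, hqp⟩ := mem_iUnion₂.1 (ht (mem_univ q))
      exact mem_biUnion hp ⟨hq, hqp⟩
    have hex : ∃ p₀ ∈ t, δ ≤ κ x (Λx ∩ ball p₀ (R / 2)) := by
      by_contra h
      push_neg at h
      have hsum : ∑ p ∈ t, κ x (Λx ∩ ball p (R / 2)) ≤ N • δ :=
        Finset.sum_le_card_nsmul t _ δ fun p hp => (h p hp).le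
      have : κ x Λx ≤ 1 / 2 := by
        calc κ x Λx ≤ (N • δ : ℝ≥0∞) := le_trans hcover (by exact_mod_cast hsum)
        _ = 1 / 2 := by
            rw [nsmul_eq_mul, hδdef]
            rw [Nat.cast_mul, Nat.cast_ofNat, ENNReal.mul_inv (Or.inr (ENNReal.natCast_ne_top _)) (Or.inr hNne)]
            rw [← mul_assoc, mul_comm (N : ℝ≥0∞) _, mul_assoc,
              ENNReal.mul_inv_cancel hNne (ENNReal.natCast_ne_top _)]
            rw [mul_one, one_div]
      exact absurd this (not_le.2 hx0)
    obtain ⟨p₀, hp₀t, hp₀⟩ := hex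
    set A := Λx ∩ ball p₀ (R / 2) with hAdef
    have hAne : A.Nonempty := nonempty_of_measure_ne_zero (by
      intro h0; rw [h0] at hp₀; exact absurd (le_antisymm hp₀ zero_le) hδpos.ne')
    obtain ⟨q₀, hq₀⟩ := hAne
    -- contraction of A
    have hAsub : A ⊆ fiberIter f φ m x ⁻¹' closedBall (fiberIter f φ m x q₀) (r m) := by
      intro q hq
      have hd : dist q₀ q ≤ R := by
        have h1 : dist q₀ p₀ < R / 2 := mem_ball.1 hq₀.2
        have h2 : dist q p₀ < R / 2 := mem_ball.1 hq.2
        have := dist_triangle q₀ p₀ q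
        rw [dist_comm p₀ q] at this
        linarith
      have hc := hcontr (x, q₀) hq₀.1 q hd m
      simp only [mem_preimage, mem_closedBall]
      rw [dist_comm]
      calc dist (fiberIter f φ m x q₀) (fiberIter f φ m x q) ≤ C * c ^ m * dist q₀ q := hc
        _ ≤ C * c ^ m * R := by
            have : (0:ℝ) < C * c ^ m := by positivity
            nlinarith
    have hκm : δ ≤ κ (f^[m] x) (closedBall (fiberIter f φ m x q₀) (r m)) := by
      rw [← hG₀prop x hxG m,
        Measure.map_apply (fiberIter_measurable f φ hφm m x) measurableSet_closedBall]
      exact le_trans hp₀ (measure_mono hAsub)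
    obtain ⟨d, hdD, hdd⟩ := hDd.exists_dist_lt (fiberIter f φ m x q₀) (hrpos m)
    have hsub2 : closedBall (fiberIter f φ m x q₀) (r m) ⊆ closedBall d (2 * r m) := by
      intro z hz
      rw [mem_closedBall] at hz ⊢
      have h3 := dist_triangle z (fiberIter f φ m x q₀) d
      have hdd' : dist (fiberIter f φ m x q₀) d < r m := hdd
      linarith
    exact mem_biUnion hdD (le_trans hκm (measure_mono hsub2))
  have hHν : ∀ m, ν (X₀ ∩ G₀) ≤ ν (H m) := by
    intro m
    rw [← (hf.iterate m).measure_preimage (hHmeas m).nullMeasurableSet]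
    exact measure_mono (hincl m)
  -- the limsup set
  set U : ℕ → Set X := fun n => ⋃ m, ⋃ (_ : n ≤ m), H m with hUdef
  have hUmeas : ∀ n, MeasurableSet (U n) := fun n =>
    MeasurableSet.iUnion fun m => MeasurableSet.iUnion fun _ => hHmeas m
  have hUanti : Antitone U := by
    intro n n' hnn'
    exact Set.iUnion₂_mono' fun m hm => ⟨m, le_trans hnn' hm, subset_rfl⟩
  set Y := ⋂ n, U n with hYdef
  have hYmeas : MeasurableSet Y := MeasurableSet.iInter hUmeas
  have hYν : 0 < ν Y := by
    have : ν Y = ⨅ n, ν (U n) :=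
      Antitone.measure_iInter hUanti (fun n => (hUmeas n).nullMeasurableSet)
        ⟨0, measure_ne_top ν _⟩
    rw [this]
    refine lt_of_lt_of_le hβ (le_iInf fun n => ?_)
    exact le_trans (hHν n) (measure_mono fun y hy => mem_iUnion₂.2 ⟨n, le_rfl, hy⟩)
  refine ⟨δ, hδpos, Y, hYmeas, hYν, ?_⟩
  intro y hy
  -- extract centers
  have hsel : ∀ n : ℕ, ∃ m : ℕ, n ≤ m ∧ ∃ d ∈ D, δ ≤ κ y (closedBall d (2 * r m)) := by
    intro n
    have := mem_iInter.1 hy n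
    obtain ⟨m, hm, hmem⟩ := mem_iUnion₂.1 this
    obtain ⟨d, hdD, hd⟩ := mem_iUnion₂.1 hmem
    exact ⟨m, hm, d, hdD, hd⟩
  choose ms hms ds hdsD hκs using hsel
  obtain ⟨q, -, σ, hσ, hconv⟩ := isCompact_univ.tendsto_subseq (fun n => mem_univ (ds n))
  have hball : ∀ ε : ℝ, 0 < ε → δ ≤ κ y (closedBall q ε) := by
    intro ε hε
    -- eventually 2 * r (ms (σ j)) ≤ ε/2 and dist (ds (σ j)) q < ε/2
    have h1 : ∀ᶠ j in Filter.atTop, dist (ds (σ j)) q < ε / 2 := by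
      have := hconv
      rw [Metric.tendsto_atTop] at this
      obtain ⟨J, hJ⟩ := this (ε / 2) (by linarith)
      exact Filter.eventually_atTop.2 ⟨J, fun j hj => hJ j hj⟩
    have h2 : ∀ᶠ j in Filter.atTop, 2 * r (ms (σ j)) ≤ ε / 2 := by
      rw [Metric.tendsto_atTop] at hrtend
      obtain ⟨J, hJ⟩ := hrtend (ε / 8) (by linarith)
      refine Filter.eventually_atTop.2 ⟨J, fun j hj => ?_⟩
      have hmsj : J ≤ ms (σ j) := le_trans hj (le_trans (hσ.le_apply) (hms (σ j)))
      have := hJ (ms (σ j)) hmsj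
      rw [Real.dist_eq, sub_zero, abs_of_pos (hrpos _)] at this
      linarith
    obtain ⟨j, hj1, hj2⟩ := (h1.and h2).exists
    have hsub : closedBall (ds (σ j)) (2 * r (ms (σ j))) ⊆ closedBall q ε := by
      intro z hz
      rw [mem_closedBall] at hz ⊢
      have := dist_triangle z (ds (σ j)) q
      linarith
    exact le_trans (hκs (σ j)) (measure_mono hsub)
  refine ⟨q, ?_⟩
  have hsingleton : {q} = ⋂ n : ℕ, closedBall q ((n : ℝ) + 1)⁻¹ := by
    ext z
    simp only [mem_singleton_iff, mem_iInter, mem_closedBall]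
    constructor
    · rintro rfl n; rw [dist_self]; positivity
    · intro h
      have : dist z q ≤ 0 := by
        by_contra hzq
        push_neg at hzq
        obtain ⟨n, hn⟩ := exists_nat_gt (dist z q)⁻¹
        have hd0 : 0 < dist z q := hzq
        have : ((n : ℝ) + 1)⁻¹ < dist z q := by
          rw [inv_lt_comm₀ (by positivity) hd0]
          calc (dist z q)⁻¹ < n := hn
          _ ≤ n + 1 := by linarith
        exact absurd (h n) (not_le.2 this)
      exact dist_le_zero.1 this
  rw [hsingleton]
  have : ν Y = ν Y := rfl
  have hmeasint : κ y (⋂ n : ℕ, closedBall q ((n : ℝ) + 1)⁻¹) =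
      ⨅ n : ℕ, κ y (closedBall q ((n : ℝ) + 1)⁻¹) := by
    refine Antitone.measure_iInter ?_ (fun n => measurableSet_closedBall.nullMeasurableSet)
      ⟨0, measure_ne_top _ _⟩
    intro n n' hnn'
    refine closedBall_subset_closedBall ?_
    have h1 : (n : ℝ) + 1 ≤ (n' : ℝ) + 1 := by exact_mod_cast by omega
    exact inv_anti₀ (by positivity) h1
  rw [hmeasint]
  exact le_iInf fun n => hball _ (by positivity)

end AuxMetric

/-- **Theorem II (contraction-hypothesis form).** For a skew product over an invertible
ergodic base with an invariant ergodic measure whose fiber maps contract exponentially on a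
set of measure `> 1/2` (with fiberwise measure `> 1/2` as well), there is a full-measure set
meeting a.e. fiber in exactly `k` points. -/
theorem theoremII_contraction
    {X : Type*} [MeasurableSpace X] [StandardBorelSpace X]
    (ν : Measure X) [IsProbabilityMeasure ν]
    (f : X → X) (hf : MeasurePreserving f ν ν) (hfbij : Function.Bijective f)
    (hferg : Ergodic f ν)
    {M : Type*} [MetricSpace M] [CompactSpace M] [MeasurableSpace M] [BorelSpace M]
    (φ : X → M → M)
    (hφcont : ∀ x, Continuous (φ x)) (hφbij : ∀ x, Function.Bijective (φ x))
    (hφmeas : Measurable fun z : X × M => φ z.1 z.2)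
    (μ : Measure (X × M)) [IsProbabilityMeasure μ]
    (hFinv : MeasurePreserving (fun z : X × M => (f z.1, φ z.1 z.2)) μ μ)
    (hFerg : Ergodic (fun z : X × M => (f z.1, φ z.1 z.2)) μ)
    (hproj : μ.map Prod.fst = ν)
    (μx : X → Measure M) (hμxprob : ∀ x, IsProbabilityMeasure (μx x))
    (hdisint : ∀ E : Set (X × M), MeasurableSet E →
      μ E = ∫⁻ x, μx x {p | (x, p) ∈ E} ∂ν)
    (hequiv : ∀ᵐ x ∂ν, (μx x).map (φ x) = μx (f x))
    (Λ : Set (X × M)) (hΛmeas : MeasurableSet Λ)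
    (R C c : ℝ) (hR : 0 < R) (hC : 0 < C) (hc0 : 0 < c) (hc1 : c < 1)
    (hΛμ : 1 / 2 < μ Λ)
    (hΛfib : ∀ z ∈ Λ, 1 / 2 < μx z.1 {q : M | (z.1, q) ∈ Λ})
    (hcontr : ∀ z ∈ Λ, ∀ q : M, dist z.2 q ≤ R → ∀ m : ℕ,
      dist (fiberIter f φ m z.1 z.2) (fiberIter f φ m z.1 q) ≤ C * c ^ m * dist z.2 q) :
    ∃ (S : Set (X × M)) (k : ℕ), MeasurableSet S ∧ 1 ≤ k ∧ μ S = 1 ∧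
      ∀ z ∈ S, {q : M | (z.1, q) ∈ S}.encard = k := by
  classical
  -- `M` is nonempty
  rcases isEmpty_or_nonempty M with hM | hM
  · exfalso
    have h1 : μ univ = 1 := measure_univ
    rw [Set.univ_eq_empty_iff.2 (by infer_instance)] at h1
    simp at h1
  -- the canonical disintegration kernel
  set κ : Kernel X M := μ.condKernel with hκdef
  have hfst : μ.fst = ν := hproj
  have hμκ : ν ⊗ₘ κ = μ := by rw [← hfst]; exact μ.disintegrate κ
  have hφm : ∀ x, Measurable (φ x) := fun x => (hφcont x).measurable
  -- equivariance of the kernel and its iterates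
  have hκeq : ∀ᵐ x ∂ν, (κ x).map (φ x) = κ (f x) :=
    kernel_equiv ν f hf κ μ hμκ μx hμxprob hdisint φ hφm hφmeas hequiv
  have hκiter := kernel_iter ν f hf κ φ hφm hκeq
  -- the atom-mass function
  set g : X × M → ℝ≥0∞ := fun z => κ z.1 {z.2} with hgdef
  have hgmeas : Measurable g := g_measurable κ
  have hginv : g ∘ (fun z : X × M => (f z.1, φ z.1 z.2)) =ᵐ[μ] g := by
    have h1 : ∀ᵐ z ∂μ, (κ z.1).map (φ z.1) = κ (f z.1) := by
      rw [← hproj] at hκeq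
      exact ae_of_ae_map measurable_fst.aemeasurable hκeq
    filter_upwards [h1] with z hz
    show κ (f z.1) {φ z.1 z.2} = κ z.1 {z.2}
    rw [← hz, Measure.map_apply (hφm z.1) (measurableSet_singleton _)]
    congr 1
    ext q
    simp [(hφbij z.1).injective.eq_iff]
  obtain ⟨a, ha⟩ := hFerg.ae_eq_const_of_ae_eq_comp₀ hgmeas.nullMeasurable hginv
  -- positivity of the base set
  have hμΛκ : μ Λ = ∫⁻ x, κ x (Prod.mk x ⁻¹' Λ) ∂ν := by
    rw [← hμκ]; exact Measure.compProd_apply hΛmeas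
  have hΛxmeas : Measurable fun x => κ x (Prod.mk x ⁻¹' Λ) :=
    Kernel.measurable_kernel_prodMk_left hΛmeas
  have hX0 : 0 < ν {x | 1 / 2 < κ x (Prod.mk x ⁻¹' Λ)} := by
    set X₀ := {x | 1 / 2 < κ x (Prod.mk x ⁻¹' Λ)} with hX₀def
    have hX₀meas : MeasurableSet X₀ := measurableSet_lt measurable_const hΛxmeas
    by_contra h
    push_neg at h
    have h0 : ν X₀ = 0 := le_antisymm h zero_le
    have hhalf : μ Λ ≤ 1 / 2 := by
      rw [hμΛκ, ← lintegral_add_compl (fun x => κ x (Prod.mk x ⁻¹' Λ)) hX₀meas]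
      have h1 : ∫⁻ x in X₀, κ x (Prod.mk x ⁻¹' Λ) ∂ν = 0 :=
        setLIntegral_measure_zero _ _ h0
      have h2 : ∫⁻ x in X₀ᶜ, κ x (Prod.mk x ⁻¹' Λ) ∂ν ≤ 1 / 2 := by
        calc ∫⁻ x in X₀ᶜ, κ x (Prod.mk x ⁻¹' Λ) ∂ν
            ≤ ∫⁻ _ in X₀ᶜ, (1 / 2 : ℝ≥0∞) ∂ν := by
              refine setLIntegral_mono' hX₀meas.compl fun x hx => ?_
              exact not_lt.1 hx
        _ = 1 / 2 * ν X₀ᶜ := setLIntegral_const _ _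
        _ ≤ 1 / 2 * 1 := by
              exact mul_le_mul_of_nonneg_left prob_le_one zero_le
        _ = 1 / 2 := mul_one _
      calc ∫⁻ x in X₀, κ x (Prod.mk x ⁻¹' Λ) ∂ν
              + ∫⁻ x in X₀ᶜ, κ x (Prod.mk x ⁻¹' Λ) ∂ν
          ≤ 0 + 1 / 2 := add_le_add h1.le h2
      _ = 1 / 2 := zero_add _
    exact absurd hhalf (not_le.2 hΛμ)
  obtain ⟨δ, hδpos, Y, hYmeas, hYpos, hYatom⟩ :=
    atom_exists ν f hf κ φ hφm hκiter Λ hΛmeas R C c hR hC hc0 hc1 hcontr hX0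
  -- a is at least δ
  have hδa : δ ≤ a := by
    by_contra h
    push_neg at h
    have hset : MeasurableSet {z : X × M | δ ≤ g z} :=
      measurableSet_le measurable_const hgmeas
    have hpos : 0 < μ {z : X × M | δ ≤ g z} := by
      have heq : μ {z : X × M | δ ≤ g z}
          = ∫⁻ x, κ x (Prod.mk x ⁻¹' {z : X × M | δ ≤ g z}) ∂ν := by
        rw [← hμκ]; exact Measure.compProd_apply hset
      rw [heq]
      have hge : δ * ν Y ≤ ∫⁻ x, κ x (Prod.mk x ⁻¹' {z : X × M | δ ≤ g z}) ∂ν := by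
        calc δ * ν Y = ∫⁻ _ in Y, δ ∂ν := (setLIntegral_const _ _).symm
        _ ≤ ∫⁻ x in Y, κ x (Prod.mk x ⁻¹' {z : X × M | δ ≤ g z}) ∂ν := by
            refine setLIntegral_mono' hYmeas fun x hx => ?_
            obtain ⟨q, hq⟩ := hYatom x hx
            calc δ ≤ κ x {q} := hq
            _ ≤ κ x (Prod.mk x ⁻¹' {z : X × M | δ ≤ g z}) := by
                refine measure_mono ?_
                intro p hp
                rw [mem_singleton_iff] at hp
                subst hp
                exact hq
        _ ≤ ∫⁻ x, κ x (Prod.mk x ⁻¹' {z : X × M | δ ≤ g z}) ∂ν :=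
            setLIntegral_le_lintegral _ _
      exact lt_of_lt_of_le (ENNReal.mul_pos hδpos.ne' hYpos.ne') hge
    have hzero : μ {z : X × M | δ ≤ g z} = 0 := by
      have hsub : ∀ᵐ z ∂μ, ¬ (δ ≤ g z) := by
        filter_upwards [ha] with z hz
        rw [not_le]
        exact hz.trans_lt h
      have h0 := ae_iff.1 hsub
      have hseteq : {z : X × M | ¬ ¬ (δ ≤ g z)} = {z : X × M | δ ≤ g z} := by
        ext z; simp [not_not]
      rw [hseteq] at h0
      exact h0
    rw [hzero] at hpos
    exact lt_irrefl 0 hpos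
  have hapos : (0 : ℝ≥0∞) < a := lt_of_lt_of_le hδpos hδa
  have hane : a ≠ 0 := hapos.ne'
  have hatop : a ≠ ⊤ := by
    haveI : (ae μ).NeBot := ae_neBot.2 (IsProbabilityMeasure.ne_zero μ)
    obtain ⟨z, hz⟩ := ha.exists
    have hz' : g z = a := hz
    rw [← hz']
    exact (lt_of_le_of_lt prob_le_one ENNReal.one_lt_top).ne
  -- the full-measure set of atoms
  set W := {z : X × M | g z = a} with hWdef
  have hWmeas : MeasurableSet W := hgmeas (measurableSet_singleton a)
  have hμW : μ W = 1 := by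
    have hWc : μ Wᶜ = 0 := by
      have hmem : ∀ᵐ z ∂μ, ¬ (z ∈ Wᶜ) := by
        filter_upwards [ha] with z hz
        simp only [mem_compl_iff, not_not]
        exact hz
      have h0 := ae_iff.1 hmem
      have hseteq : {z : X × M | ¬ ¬ (z ∈ Wᶜ)} = Wᶜ := by ext z; simp [not_not]
      rw [hseteq] at h0
      exact h0
    exact (prob_compl_eq_zero_iff hWmeas).1 hWc
  -- the fiber-mass function
  have hF1meas : Measurable fun x => κ x (Prod.mk x ⁻¹' W) :=
    Kernel.measurable_kernel_prodMk_left hWmeas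
  have hF1int : ∫⁻ x, κ x (Prod.mk x ⁻¹' W) ∂ν = 1 := by
    rw [← Measure.compProd_apply hWmeas, hμκ, hμW]
  have hF1ae : ∀ᵐ x ∂ν, κ x (Prod.mk x ⁻¹' W) = 1 := by
    have hsub : ∫⁻ x, (1 - κ x (Prod.mk x ⁻¹' W)) ∂ν = 0 := by
      rw [lintegral_sub hF1meas (by rw [hF1int]; exact ENNReal.one_ne_top)
        (Filter.Eventually.of_forall fun x => prob_le_one), hF1int, lintegral_one,
        measure_univ, tsub_self]
    have h2 := (lintegral_eq_zero_iff (measurable_const.sub hF1meas)).1 hsub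
    filter_upwards [h2] with x hx
    have hx' : (1 : ℝ≥0∞) - κ x (Prod.mk x ⁻¹' W) = 0 := hx
    exact le_antisymm prob_le_one (tsub_eq_zero_iff_le.1 hx')
  set X₁ := {x | κ x (Prod.mk x ⁻¹' W) = 1} with hX₁def
  have hX₁meas : MeasurableSet X₁ := hF1meas (measurableSet_singleton 1)
  have hνX₁ : ν X₁ = 1 := by
    have hX₁c : ν X₁ᶜ = 0 := by
      have hmem : ∀ᵐ x ∂ν, ¬ (x ∈ X₁ᶜ) := by
        filter_upwards [hF1ae] with x hx
        simp only [mem_compl_iff, not_not]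
        exact hx
      have h0 := ae_iff.1 hmem
      have hseteq : {x : X | ¬ ¬ (x ∈ X₁ᶜ)} = X₁ᶜ := by ext x; simp [not_not]
      rw [hseteq] at h0
      exact h0
    exact (prob_compl_eq_zero_iff hX₁meas).1 hX₁c
  set S := W ∩ (X₁ ×ˢ (univ : Set M)) with hSdef
  have hSmeas : MeasurableSet S := hWmeas.inter (hX₁meas.prod MeasurableSet.univ)
  have hμX₁M : μ (X₁ ×ˢ (univ : Set M)) = 1 := by
    rw [← hμκ, Measure.compProd_apply (hX₁meas.prod MeasurableSet.univ)]
    have hsec : ∀ x, κ x (Prod.mk x ⁻¹' (X₁ ×ˢ (univ : Set M)))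
        = X₁.indicator (fun _ => 1) x := by
      intro x
      by_cases hx : x ∈ X₁
      · have h1 : Prod.mk x ⁻¹' (X₁ ×ˢ (univ : Set M)) = univ := by
          ext q; simp [hx]
        rw [h1, Set.indicator_of_mem hx]
        exact measure_univ
      · have h1 : Prod.mk x ⁻¹' (X₁ ×ˢ (univ : Set M)) = ∅ := by
          ext q; simp [hx]
        rw [h1, Set.indicator_of_notMem hx]
        exact measure_empty
    rw [lintegral_congr hsec, lintegral_indicator hX₁meas, setLIntegral_const, one_mul, hνX₁]
  have hμS : μ S = 1 := by
    have hScompl : μ Sᶜ = 0 := by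
      have h1 : Sᶜ = Wᶜ ∪ (X₁ ×ˢ (univ : Set M))ᶜ := by
        rw [hSdef, Set.compl_inter]
      have hW0 : μ Wᶜ = 0 := (prob_compl_eq_zero_iff hWmeas).2 hμW
      have hX0' : μ (X₁ ×ˢ (univ : Set M))ᶜ = 0 :=
        (prob_compl_eq_zero_iff (hX₁meas.prod MeasurableSet.univ)).2 hμX₁M
      rw [h1]
      exact le_antisymm (le_trans (measure_union_le _ _) (by rw [hW0, hX0']; simp))
        zero_le
    exact (prob_compl_eq_zero_iff hSmeas).1 hScompl
  -- fibers over X₁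
  have hfiber : ∀ x ∈ X₁, ∃ n : ℕ,
      (Prod.mk x ⁻¹' W).encard = n ∧ (n : ℝ≥0∞) * a = 1 := by
    intro x hx
    refine fiber_count (κ x) a hane hatop (Prod.mk x ⁻¹' W) (fun q hq => hq) hx
  -- choose the reference point
  have hX₁ne : X₁.Nonempty := by
    refine nonempty_of_measure_ne_zero (μ := ν) ?_
    rw [hνX₁]; exact one_ne_zero
  obtain ⟨x₀, hx₀⟩ := hX₁ne
  obtain ⟨k, hk₁, hk₂⟩ := hfiber x₀ hx₀
  have hkcast : ∀ n : ℕ, (n : ℝ≥0∞) * a = 1 → n = k := by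
    intro n hn
    have h1 : (n : ℝ≥0∞) = (k : ℝ≥0∞) := by
      calc (n : ℝ≥0∞) = (n : ℝ≥0∞) * (a * a⁻¹) := by
            rw [ENNReal.mul_inv_cancel hane hatop, mul_one]
      _ = ((n : ℝ≥0∞) * a) * a⁻¹ := by ring
      _ = ((k : ℝ≥0∞) * a) * a⁻¹ := by rw [hn, hk₂]
      _ = (k : ℝ≥0∞) * (a * a⁻¹) := by ring
      _ = (k : ℝ≥0∞) := by rw [ENNReal.mul_inv_cancel hane hatop, mul_one]
    exact_mod_cast h1
  have hk1 : 1 ≤ k := by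
    rcases Nat.eq_zero_or_pos k with hk0 | hk0
    · exfalso
      rw [hk0] at hk₂
      simp at hk₂
    · exact hk0
  refine ⟨S, k, hSmeas, hk1, hμS, ?_⟩
  rintro ⟨x, p⟩ hz
  have hx₁ : x ∈ X₁ := hz.2.1
  have hfib_eq : {q : M | ((x, p).1, q) ∈ S} = Prod.mk x ⁻¹' W := by
    ext q
    simp only [hSdef, mem_setOf_eq, mem_inter_iff, mem_prod, mem_preimage, mem_univ, and_true]
    exact ⟨fun h => h.1, fun h => ⟨h, hx₁⟩⟩
  rw [hfib_eq]
  obtain ⟨n, hn₁, hn₂⟩ := hfiber x hx₁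
  rw [hn₁, hkcast n hn₂]
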